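/- arXiv:math/9604202 — 2 statements merged into one kernel-verified Lean document; each statement's English description precedes it below -/
import Mathlib

section
/- Fix an integer k. Let H ⊆ L²(∂Δ, ℂ) be the Hardy subspace of functions whose Fourier coefficients of negative index vanish. Then the ℝ-linear map p_k : H → L²(∂Δ, ℂ) defined by p_k(w)(ζ) = w(ζ) + ζ^k · conj(w(ζ)) has closed range. Indeed, identifying L² with ℓ² via Fourier coefficients (b_m)_{m∈ℤ}, the range of p_k is exactly the set of sequences arising from elements w with w_m = 0 for m < 0 under a_m ↦ a_m + conj(a_{k-m}), described by the closed conditions b_{k-m} = conj(b_m) together with appropriate vanishing conditions. -/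
open MeasureTheory Complex Real

local instance : Fact (0 < 2 * π) := ⟨Real.two_pi_pos⟩

local notation "μ2π" => @AddCircle.haarAddCircle (2 * π) _

namespace Stmt2Aux

/-- Continuity of the `n`-th Fourier coefficient functional on `L²`. -/
lemma coeff_continuous (n : ℤ) :
    Continuous fun g : Lp ℂ 2 μ2π => fourierCoeff (g : AddCircle (2 * π) → ℂ) n := by
  have hrw : (fun g : Lp ℂ 2 μ2π => fourierCoeff (g : AddCircle (2 * π) → ℂ) n)
      = fun g => (fourierBasis.repr g) n := by
    funext g; rw [fourierBasis_repr]
  rw [hrw]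
  have h1 : Continuous fun x : lp (fun _ : ℤ => ℂ) 2 => x n := by
    apply LipschitzWith.continuous (K := 1)
    apply LipschitzWith.of_dist_le_mul
    intro x y
    simp only [NNReal.coe_one, one_mul, dist_eq_norm]
    have := lp.norm_apply_le_norm (E := fun _ : ℤ => ℂ) (p := 2) (by norm_num) (x - y) n
    simpa using this
  exact h1.comp (fourierBasis.repr.continuous)

lemma norm_fourier_apply (j : ℤ) (x : AddCircle (2 * π)) : ‖fourier j x‖ = 1 := by
  rw [fourier_apply, Circle.norm_coe]

/-- The Fourier coefficient of `fourier k • conj f`. -/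
lemma coeff_shift_conj (k n : ℤ) (f : AddCircle (2 * π) → ℂ) :
    fourierCoeff (fun x => fourier k x * starRingEnd ℂ (f x)) n
      = starRingEnd ℂ (fourierCoeff f (k - n)) := by
  unfold fourierCoeff
  rw [← integral_conj]
  apply integral_congr_ae
  filter_upwards with x
  have h1 : fourier (k - n) x = fourier (-n) x * fourier k x := by
    rw [← fourier_add]; norm_num [sub_eq_neg_add]
  have h2 : starRingEnd ℂ (fourier (-(k - n)) x) = fourier (k - n) x := by
    rw [fourier_neg, Complex.conj_conj]
  simp only [smul_eq_mul, map_mul, h2]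
  rw [h1]; ring

lemma memLp_term (k : ℤ) (w : Lp ℂ 2 μ2π) :
    MemLp (fun x => fourier k x * starRingEnd ℂ ((w : AddCircle (2 * π) → ℂ) x)) 2 μ2π := by
  refine MemLp.mono' (MemLp.norm (Lp.memLp w)) ?_ ?_
  · exact ((map_continuous (fourier k)).aestronglyMeasurable).mul
      (Complex.continuous_conj.comp_aestronglyMeasurable (Lp.aestronglyMeasurable w))
  · filter_upwards with x
    simp [norm_fourier_apply, Circle.norm_coe]

lemma integrable_smul_term (j : ℤ) (f : AddCircle (2 * π) → ℂ) (hf : MemLp f 2 μ2π) :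
    Integrable (fun x => fourier j x • f x) μ2π := by
  have hint : Integrable f μ2π := MemLp.integrable one_le_two hf
  refine Integrable.mono' hint.norm ?_ ?_
  · exact ((map_continuous (fourier j)).aestronglyMeasurable).smul hf.aestronglyMeasurable
  · filter_upwards with x
    simp [norm_smul, norm_fourier_apply, Circle.norm_coe]

/-- Fourier coefficients of `g` when `g = w + fourier k ⬝ conj w` a.e. -/
lemma coeff_eq (k : ℤ) (w g : Lp ℂ 2 μ2π)
    (hg : (g : AddCircle (2 * π) → ℂ) =ᵐ[μ2π]
      fun x => (w : AddCircle (2 * π) → ℂ) x +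
        fourier k x * starRingEnd ℂ ((w : AddCircle (2 * π) → ℂ) x)) (n : ℤ) :
    fourierCoeff (g : AddCircle (2 * π) → ℂ) n
      = fourierCoeff (w : AddCircle (2 * π) → ℂ) n
        + starRingEnd ℂ (fourierCoeff (w : AddCircle (2 * π) → ℂ) (k - n)) := by
  have h1 : fourierCoeff (g : AddCircle (2 * π) → ℂ) n
      = fourierCoeff (fun x => (w : AddCircle (2 * π) → ℂ) x +
          fourier k x * starRingEnd ℂ ((w : AddCircle (2 * π) → ℂ) x)) n := by
    unfold fourierCoeff
    apply integral_congr_ae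
    filter_upwards [hg] with x hx
    rw [hx]
  rw [h1, ← coeff_shift_conj k n]
  unfold fourierCoeff
  have hw2 := Lp.memLp w
  have hint1 : Integrable (fun x => fourier (-n) x • (w : AddCircle (2 * π) → ℂ) x) μ2π :=
    integrable_smul_term (-n) _ hw2
  have hint2 : Integrable
      (fun x => fourier (-n) x •
        (fourier k x * starRingEnd ℂ ((w : AddCircle (2 * π) → ℂ) x))) μ2π :=
    integrable_smul_term (-n) _ (memLp_term k w)
  rw [← integral_add hint1 hint2]
  apply integral_congr_ae
  filter_upwards with x
  simp [smul_eq_mul, mul_add]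

end Stmt2Aux

open Stmt2Aux in
/-- the ℝ-linear map `p_k : H → L²(∂Δ, ℂ)`,
`p_k(w)(ζ) = w(ζ) + ζ^k conj (w ζ)`, defined on the Hardy space `H`
(elements of `L²` of the circle with vanishing negative Fourier coefficients),
has closed range. The circle is realized as `AddCircle (2π)` with Haar measure,
and `ζ^k` as the character `fourier k`. -/
theorem stmt2 (k : ℤ) :
    IsClosed {g : Lp ℂ 2 (@AddCircle.haarAddCircle (2 * π) _) |
      ∃ w : Lp ℂ 2 (@AddCircle.haarAddCircle (2 * π) _),
        (∀ n : ℤ, n < 0 → fourierCoeff (w : AddCircle (2 * π) → ℂ) n = 0) ∧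
        (g : AddCircle (2 * π) → ℂ) =ᵐ[AddCircle.haarAddCircle]
          fun x => (w : AddCircle (2 * π) → ℂ) x +
            fourier k x * starRingEnd ℂ ((w : AddCircle (2 * π) → ℂ) x)} := by
  have hset : {g : Lp ℂ 2 μ2π |
      ∃ w : Lp ℂ 2 μ2π,
        (∀ n : ℤ, n < 0 → fourierCoeff (w : AddCircle (2 * π) → ℂ) n = 0) ∧
        (g : AddCircle (2 * π) → ℂ) =ᵐ[μ2π]
          fun x => (w : AddCircle (2 * π) → ℂ) x +
            fourier k x * starRingEnd ℂ ((w : AddCircle (2 * π) → ℂ) x)}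
      = {g : Lp ℂ 2 μ2π | ∀ n : ℤ,
            fourierCoeff (g : AddCircle (2 * π) → ℂ) (k - n)
              = starRingEnd ℂ (fourierCoeff (g : AddCircle (2 * π) → ℂ) n)}
        ∩ {g : Lp ℂ 2 μ2π | ∀ n : ℤ, n < 0 → k - n < 0 →
            fourierCoeff (g : AddCircle (2 * π) → ℂ) n = 0} := by
    ext g
    constructor
    · rintro ⟨w, hw, hg⟩
      have hc := coeff_eq k w g hg
      constructor
      · intro n
        rw [hc n, hc (k - n)]
        have hkn : k - (k - n) = n := by ring
        rw [hkn, map_add, Complex.conj_conj]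
        ring
      · intro n hn hkn
        rw [hc n, hw n hn, hw (k - n) hkn, map_zero, add_zero]
    · rintro ⟨h1, h2⟩
      set b : ℤ → ℂ := fun n => fourierCoeff (g : AddCircle (2 * π) → ℂ) n with hb
      -- define the coefficient sequence of the preimage
      set a : ℤ → ℂ := fun n =>
        if n < 0 then 0
        else if 2 * n < k then b n
        else if 2 * n = k then b n / 2
        else if 0 ≤ k - n then 0 else b n with ha
      have hnorm : ∀ n, ‖a n‖ ≤ ‖b n‖ := by
        intro n
        simp only [ha]
        split_ifs
        · simp
        · exact le_rfl
        · rw [norm_div]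
          have h2 : ‖(2 : ℂ)‖ = 2 := by norm_num
          rw [h2]
          linarith [norm_nonneg (b n)]
        · simp
        · exact le_rfl
      -- b is square-summable
      have hbsum : Summable fun n : ℤ => ‖b n‖ ^ ((2 : ENNReal).toReal) := by
        have := lp.memℓp (fourierBasis.repr g)
        have h := (lp.memℓp (fourierBasis.repr g)).summable (p := 2) (by norm_num)
        have heq : ∀ n : ℤ, (fourierBasis.repr g) n = b n := fun n => fourierBasis_repr g n
        refine h.congr fun n => ?_
        rw [heq n]
      have hasum : Memℓp a 2 := by
        apply memℓp_gen
        refine Summable.of_nonneg_of_le (fun n => ?_) (fun n => ?_) hbsum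
        · positivity
        · exact Real.rpow_le_rpow (norm_nonneg _) (hnorm n) ENNReal.toReal_nonneg
      set A : lp (fun _ : ℤ => ℂ) 2 := ⟨a, hasum⟩ with hA
      set w : Lp ℂ 2 μ2π := fourierBasis.repr.symm A with hwdef
      have hwa : ∀ n : ℤ, fourierCoeff (w : AddCircle (2 * π) → ℂ) n = a n := by
        intro n
        rw [← fourierBasis_repr, hwdef, LinearIsometryEquiv.apply_symm_apply]
      -- the key algebraic identity
      have hkey : ∀ n : ℤ, a n + starRingEnd ℂ (a (k - n)) = b n := by
        intro n
        have hsymm : ∀ m : ℤ, b (k - m) = starRingEnd ℂ (b m) := h1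
        have hzero : ∀ m : ℤ, m < 0 → k - m < 0 → b m = 0 := h2
        have hsymm' : ∀ m : ℤ, starRingEnd ℂ (b (k - m)) = b m := by
          intro m; rw [hsymm m, Complex.conj_conj]
        simp only [ha]
        rcases lt_or_ge n 0 with hn | hn
        · rw [if_pos hn]
          rcases lt_or_ge (k - n) 0 with hkn | hkn
          · -- both negative: b n = 0
            rw [if_pos hkn, map_zero, add_zero, hzero n hn hkn]
          · -- k - n ≥ 0 : a (k - n) = b (k - n)
            have hc1 : ¬ (k - n < 0) := not_lt.mpr hkn
            have hc2 : ¬ (2 * (k - n) < k) := by omega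
            have hc3 : ¬ (2 * (k - n) = k) := by omega
            have hc4 : ¬ (0 ≤ k - (k - n)) := by omega
            rw [if_neg hc1, if_neg hc2, if_neg hc3, if_neg hc4, zero_add, hsymm' n]
        · rw [if_neg (not_lt.mpr hn)]
          rcases lt_trichotomy (2 * n) k with hc | hc | hc
          · -- 2n < k : a n = b n, a (k - n) = 0
            rw [if_pos hc]
            have hd1 : ¬ (k - n < 0) := by omega
            have hd2 : ¬ (2 * (k - n) < k) := by omega
            have hd3 : ¬ (2 * (k - n) = k) := by omega
            have hd4 : (0 : ℤ) ≤ k - (k - n) := by omega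
            rw [if_neg hd1, if_neg hd2, if_neg hd3, if_pos hd4, map_zero, add_zero]
          · -- 2n = k : a n = b n / 2, k - n = n, b n real
            have hnn : k - n = n := by omega
            rw [if_neg (by omega : ¬ 2 * n < k), if_pos hc, hnn,
              if_neg (not_lt.mpr hn), if_neg (by omega : ¬ 2 * n < k), if_pos hc]
            have hreal : starRingEnd ℂ (b n) = b n := by
              have h' := hsymm n; rw [hnn] at h'; exact h'.symm
            rw [map_div₀, hreal]
            have h2c : (starRingEnd ℂ) (2 : ℂ) = 2 := Complex.conj_ofNat 2
            rw [h2c]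
            ring
          · -- 2n > k
            rw [if_neg (by omega : ¬ 2 * n < k), if_neg (by omega : ¬ 2 * n = k)]
            rcases lt_or_ge (k - n) 0 with hkn | hkn
            · -- k - n < 0 : a n = b n, a (k - n) = 0
              rw [if_neg (not_le.mpr (by omega : k - n < 0)), if_pos hkn, map_zero, add_zero]
            · -- k - n ≥ 0 : a n = 0, a (k - n) = b (k - n)
              rw [if_pos (by omega : (0:ℤ) ≤ k - n)]
              have hd1 : ¬ (k - n < 0) := not_lt.mpr hkn
              have hd2 : 2 * (k - n) < k := by omega
              rw [if_neg hd1, if_pos hd2, zero_add, hsymm' n]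
      -- construct G = w + fourier k ⬝ conj w as an Lp element
      have hmem : MemLp (fun x => (w : AddCircle (2 * π) → ℂ) x +
          fourier k x * starRingEnd ℂ ((w : AddCircle (2 * π) → ℂ) x)) 2 μ2π :=
        (Lp.memLp w).add (memLp_term k w)
      set G : Lp ℂ 2 μ2π := hmem.toLp _ with hG
      have hGcoe : (G : AddCircle (2 * π) → ℂ) =ᵐ[μ2π]
          fun x => (w : AddCircle (2 * π) → ℂ) x +
            fourier k x * starRingEnd ℂ ((w : AddCircle (2 * π) → ℂ) x) :=
        hmem.coeFn_toLp
      have hGco : ∀ n : ℤ, fourierCoeff (G : AddCircle (2 * π) → ℂ) n = b n := by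
        intro n
        rw [coeff_eq k w G hGcoe n, hwa n, hwa (k - n), hkey n]
      have hGg : G = g := by
        apply fourierBasis.repr.injective
        apply lp.ext
        funext n
        show fourierBasis.repr G n = fourierBasis.repr g n
        rw [fourierBasis_repr, fourierBasis_repr, hGco n]
      refine ⟨w, ?_, ?_⟩
      · intro n hn
        rw [hwa n]
        simp only [ha]
        rw [if_pos hn]
      · rw [← hGg]
        exact hGcoe
  rw [hset]
  apply IsClosed.inter
  · have : {g : Lp ℂ 2 μ2π | ∀ n : ℤ,
        fourierCoeff (g : AddCircle (2 * π) → ℂ) (k - n)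
          = starRingEnd ℂ (fourierCoeff (g : AddCircle (2 * π) → ℂ) n)}
        = ⋂ n : ℤ, {g : Lp ℂ 2 μ2π |
            fourierCoeff (g : AddCircle (2 * π) → ℂ) (k - n)
              = starRingEnd ℂ (fourierCoeff (g : AddCircle (2 * π) → ℂ) n)} := by
      ext g; simp [Set.mem_iInter]
    rw [this]
    apply isClosed_iInter
    intro n
    exact isClosed_eq (coeff_continuous (k - n))
      (Complex.continuous_conj.comp (coeff_continuous n))
  · have : {g : Lp ℂ 2 μ2π | ∀ n : ℤ, n < 0 → k - n < 0 →
        fourierCoeff (g : AddCircle (2 * π) → ℂ) n = 0}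
        = ⋂ n : ℤ, ⋂ (_ : n < 0), ⋂ (_ : k - n < 0),
            {g : Lp ℂ 2 μ2π | fourierCoeff (g : AddCircle (2 * π) → ℂ) n = 0} := by
      ext g; simp [Set.mem_iInter]
    rw [this]
    exact isClosed_iInter fun n => isClosed_iInter fun _ => isClosed_iInter fun _ =>
      isClosed_eq (coeff_continuous n) continuous_const
end

section
/- Let f be holomorphic on the open unit disc, Hölder continuous of exponent β > 1/2 on the closed disc, with f(0) = 0 and Re(f(−1)) = 0. Then i·Im((1/2π)∫₀^{2π} f(e^{iθ})/(1 + e^{iθ}) dθ) = −f(−1)/2. More precisely, (1/2π)∫₀^{2π} (f(ζ) − f(−1))/(1 + ζ) dθ = −f(−1) (interpreted as an L¹ integral, ζ = e^{iθ}) and f(−1)·Re((1/2π)∫₀^{2π} 1/(1 + e^{iθ}) dθ) = f(−1)/2. -/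
open Complex Metric MeasureTheory Real intervalIntegral

lemma norm_one_add_exp (θ : ℝ) :
    ‖1 + Complex.exp (θ * Complex.I)‖ = 2 * |Real.cos (θ / 2)| := by
  have key : (1 : ℂ) + Complex.exp (θ * Complex.I)
      = Complex.exp ((θ / 2 : ℝ) * Complex.I) * ((2 * Real.cos (θ / 2) : ℝ)) := by
    rw [show ((2 * Real.cos (θ / 2) : ℝ) : ℂ) = 2 * Complex.cos ((θ / 2 : ℝ) : ℂ) by
      push_cast [Complex.ofReal_cos]; ring]
    rw [Complex.cos]
    rw [show (2 : ℂ) * ((Complex.exp (((θ / 2 : ℝ) : ℂ) * I) +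
        Complex.exp (-((θ / 2 : ℝ) : ℂ) * I)) / 2)
      = Complex.exp (((θ / 2 : ℝ) : ℂ) * I) + Complex.exp (-((θ / 2 : ℝ) : ℂ) * I) by ring]
    rw [mul_add, ← Complex.exp_add, ← Complex.exp_add]
    rw [show (((θ / 2 : ℝ) : ℂ) * I + ((θ / 2 : ℝ) : ℂ) * I) = (θ : ℂ) * I by
      push_cast; ring]
    rw [show (((θ / 2 : ℝ) : ℂ) * I + -((θ / 2 : ℝ) : ℂ) * I) = 0 by ring]
    rw [Complex.exp_zero]
    ring
  rw [key, norm_mul]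
  rw [show ‖Complex.exp ((θ / 2 : ℝ) * Complex.I)‖ = 1 by
    rw [Complex.norm_exp_ofReal_mul_I]]
  rw [one_mul, Complex.norm_real, Real.norm_eq_abs, abs_mul]; norm_num

lemma lower_bound {θ : ℝ} (h0 : 0 ≤ θ) (h2 : θ ≤ 2 * π) :
    2 / π * |π - θ| ≤ ‖1 + Complex.exp (θ * Complex.I)‖ := by
  rw [norm_one_add_exp]
  set x : ℝ := (π - θ) / 2 with hx
  have hcos : Real.cos (θ / 2) = Real.sin x := by
    rw [hx, show (π - θ) / 2 = π / 2 - θ / 2 by ring, Real.sin_pi_div_two_sub]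
  have hxabs : |x| ≤ π / 2 := by
    rw [abs_le]; constructor <;> [skip; skip] <;> rw [hx] <;> nlinarith [Real.pi_pos]
  have h1 : 2 / π * |x| ≤ Real.sin |x| :=
    Real.mul_le_sin (abs_nonneg x) hxabs
  have h3 : Real.sin |x| ≤ |Real.sin x| := by
    rcases abs_cases x with ⟨h, _⟩ | ⟨h, _⟩
    · rw [h]; exact le_abs_self _
    · rw [h, Real.sin_neg]; exact neg_le_abs _
  have h4 : |π - θ| = 2 * |x| := by rw [hx, abs_div]; simp [abs_two]; ring
  rw [hcos, h4]
  have hπ : 0 < π := Real.pi_pos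
  calc 2 / π * (2 * |x|) = 2 * (2 / π * |x|) := by ring
    _ ≤ 2 * Real.sin |x| := by linarith
    _ ≤ 2 * |Real.sin x| := by linarith

lemma norm_le_norm_add_eps {w : ℂ} (hw : 0 ≤ w.re) {ε : ℝ} (hε : 0 ≤ ε) :
    ‖w‖ ≤ ‖(ε : ℂ) + w‖ := by
  rw [Complex.norm_def, Complex.norm_def]
  apply Real.sqrt_le_sqrt
  simp only [Complex.normSq_apply, Complex.add_re, Complex.add_im, Complex.ofReal_re,
    Complex.ofReal_im, zero_add]
  nlinarith

lemma bound_integrable' {r : ℝ} (hr : -1 < r) :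
    IntervalIntegrable (fun θ : ℝ => |π - θ| ^ r) volume 0 (2 * π) := by
  have hπ : 0 < π := Real.pi_pos
  have base : IntervalIntegrable (fun x : ℝ => x ^ r) volume 0 π :=
    intervalIntegrable_rpow' hr
  have p1 : IntervalIntegrable (fun x : ℝ => (π - x) ^ r) volume 0 π := by
    simpa using (base.comp_sub_left π).symm
  have p2 : IntervalIntegrable (fun x : ℝ => (x - π) ^ r) volume π (2 * π) := by
    have := base.comp_sub_right π
    simpa [two_mul] using this
  have q1 : IntervalIntegrable (fun θ : ℝ => |π - θ| ^ r) volume 0 π := by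
    rw [intervalIntegrable_iff] at p1 ⊢
    apply p1.congr_fun ?_ measurableSet_uIoc
    intro x hx
    rw [Set.uIoc_of_le hπ.le] at hx
    show (π - x) ^ r = |π - x| ^ r
    rw [_root_.abs_of_nonneg (by linarith [hx.2])]
  have q2 : IntervalIntegrable (fun θ : ℝ => |π - θ| ^ r) volume π (2 * π) := by
    rw [intervalIntegrable_iff] at p2 ⊢
    apply p2.congr_fun ?_ measurableSet_uIoc
    intro x hx
    rw [Set.uIoc_of_le (by linarith)] at hx
    show (x - π) ^ r = |π - x| ^ r
    rw [_root_.abs_of_nonpos (by linarith [hx.1] : π - x ≤ 0), neg_sub]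
  exact q1.trans q2

lemma holder_continuousOn {f : ℂ → ℂ} {β C : ℝ} (hβ : 0 < β)
    (hHolder : ∀ z ∈ closedBall (0 : ℂ) 1, ∀ w ∈ closedBall (0 : ℂ) 1,
      ‖f z - f w‖ ≤ C * ‖z - w‖ ^ β) :
    ContinuousOn f (closedBall (0 : ℂ) 1) := by
  intro w hw
  have h1 : Filter.Tendsto (fun z : ℂ => f z - f w) (nhdsWithin w (closedBall 0 1)) (nhds 0) := by
    apply squeeze_zero_norm' (a := fun z => C * ‖z - w‖ ^ β)
    · filter_upwards [self_mem_nhdsWithin] with z hz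
      exact hHolder z hz w hw
    · have ht : Filter.Tendsto (fun z : ℂ => ‖z - w‖) (nhdsWithin w (closedBall 0 1)) (nhds 0) := by
        have : Filter.Tendsto (fun z : ℂ => ‖z - w‖) (nhds w) (nhds 0) := by
          have hc : Continuous fun z : ℂ => ‖z - w‖ :=
            (continuous_id.sub continuous_const).norm
          simpa using hc.tendsto w
        exact this.mono_left nhdsWithin_le_nhds
      have hrpow : Filter.Tendsto (fun x : ℝ => C * x ^ β) (nhds 0) (nhds 0) := by
        have h := (Real.continuousAt_rpow_const 0 β (Or.inr hβ.le))
        have h2 : ContinuousAt (fun x : ℝ => C * x ^ β) 0 :=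
          continuousAt_const.mul h
        simpa [Real.zero_rpow hβ.ne'] using h2.tendsto
      exact hrpow.comp ht
  have := h1.add (tendsto_const_nhds (x := f w))
  simpa [ContinuousWithinAt] using this

lemma cauchy_step {f : ℂ → ℂ}
    (hd : DifferentiableOn ℂ f (ball (0 : ℂ) 1))
    (hcont : ContinuousOn f (closedBall (0 : ℂ) 1))
    (hf0 : f 0 = 0) {ε : ℝ} (hε : 0 < ε) :
    ∫ θ in (0:ℝ)..(2*π), (f (Complex.exp (θ * Complex.I)) - f (-1)) /
      (1 + (ε : ℂ) + Complex.exp (θ * Complex.I))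
      = 2 * π * (-(f (-1)) / (1 + (ε : ℂ))) := by
  set h : ℂ → ℂ := fun z => (f z - f (-1)) / (1 + (ε : ℂ) + z) with hh
  have hden : ∀ z : ℂ, z ∈ closedBall (0:ℂ) 1 → 1 + (ε : ℂ) + z ≠ 0 := by
    intro z hz h0
    have hz1 : ‖z‖ ≤ 1 := by simpa [Complex.dist_eq] using mem_closedBall_iff_norm.mp hz
    have : (1 + (ε:ℂ)) = -z := by linear_combination h0
    have h2 : ‖(1 + (ε:ℂ))‖ = ‖z‖ := by rw [this, norm_neg]
    have h3 : ‖(1 + (ε:ℂ))‖ = 1 + ε := by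
      rw [show (1 + (ε:ℂ)) = ((1 + ε : ℝ) : ℂ) by push_cast; ring, Complex.norm_real,
        Real.norm_eq_abs, _root_.abs_of_pos (by linarith)]
    rw [h3] at h2; linarith
  have hdc : DiffContOnCl ℂ h (ball (0:ℂ) 1) := by
    constructor
    · apply DifferentiableOn.div
      · exact hd.sub (differentiableOn_const _)
      · exact (differentiable_const _).differentiableOn.add differentiableOn_id
      · exact fun z hz => hden z (ball_subset_closedBall hz)
    · rw [closure_ball (0:ℂ) one_ne_zero]
      apply ContinuousOn.div
      · exact hcont.sub continuousOn_const
      · exact (continuous_const.add continuous_id).continuousOn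
      · exact hden
  have key := hdc.circleIntegral_sub_inv_smul (w := 0) (by simp)
  rw [circleIntegral] at key
  simp only [deriv_circleMap, circleMap, Complex.ofReal_one, zero_add, one_mul, sub_zero,
    smul_eq_mul] at key
  have hexp : ∀ θ : ℝ, Complex.exp (θ * Complex.I) * Complex.I *
      ((Complex.exp (θ * Complex.I))⁻¹ * h (Complex.exp (θ * Complex.I)))
      = Complex.I * h (Complex.exp (θ * Complex.I)) := by
    intro θ
    have hne : Complex.exp (θ * Complex.I) ≠ 0 := Complex.exp_ne_zero _
    field_simp
  simp only [hexp] at key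
  rw [intervalIntegral.integral_const_mul] at key
  have hI : Complex.I ≠ 0 := Complex.I_ne_zero
  have key2 : (∫ θ in (0:ℝ)..(2*π), h (Complex.exp (θ * Complex.I)))
      = 2 * π * h 0 := by
    have := mul_left_cancel₀ hI (by linear_combination key : Complex.I *
      (∫ θ in (0:ℝ)..(2*π), h (Complex.exp (θ * Complex.I))) = Complex.I * (2 * π * h 0))
    linear_combination this
  have h0 : h 0 = -(f (-1)) / (1 + (ε : ℂ)) := by
    simp [hh, hf0]
  rw [h0] at key2
  simpa [hh] using key2

/-- if `f` is holomorphic on the open unit disc, Hölder of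
exponent `β > 1/2` on the closed disc, `f 0 = 0` and `Re (f (-1)) = 0`, then
`i·Im((1/2π)∫ f(e^{iθ})/(1+e^{iθ}) dθ) = -f(-1)/2`; more precisely
`(1/2π)∫ (f(ζ) - f(-1))/(1+ζ) dθ = -f(-1)` and
`f(-1)·Re((1/2π)∫ 1/(1+e^{iθ}) dθ) = f(-1)/2` (where the real part of the
integrand `1/(1+e^{iθ})` is `1/2` a.e., `ζ = e^{iθ}`). -/
theorem stmt19 (f : ℂ → ℂ) (β C : ℝ) (hβ : 1 / 2 < β) (hβ1 : β < 1)
    (hd : DifferentiableOn ℂ f (ball (0 : ℂ) 1))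
    (hHolder : ∀ z ∈ closedBall (0 : ℂ) 1, ∀ w ∈ closedBall (0 : ℂ) 1,
      ‖f z - f w‖ ≤ C * ‖z - w‖ ^ β)
    (hf0 : f 0 = 0) (hfm1 : (f (-1)).re = 0) :
    ((1 / (2 * π) : ℂ) * (∫ θ in (0 : ℝ)..(2 * π),
        (f (Complex.exp (θ * Complex.I)) - f (-1)) /
          (1 + Complex.exp (θ * Complex.I))) = -f (-1)) ∧
    (f (-1) * (((1 / (2 * π)) * (∫ θ in (0 : ℝ)..(2 * π),
        ((1 : ℂ) / (1 + Complex.exp (θ * Complex.I))).re) : ℝ) : ℂ)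
      = f (-1) / 2) ∧
    (Complex.I * (((1 / (2 * π)) * (∫ θ in (0 : ℝ)..(2 * π),
        (f (Complex.exp (θ * Complex.I)) /
          (1 + Complex.exp (θ * Complex.I))).im) : ℝ) : ℂ)
      = -f (-1) / 2) := by
  have hπ : 0 < π := Real.pi_pos
  have h2π : (0:ℝ) ≤ 2 * π := by positivity
  have hβ0 : (0:ℝ) < β := by linarith
  have hC : 0 ≤ C := by
    have h01 : (0:ℂ) ∈ closedBall (0:ℂ) 1 := mem_closedBall_self zero_le_one
    have h11 : (1:ℂ) ∈ closedBall (0:ℂ) 1 := by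
      simp [mem_closedBall, Complex.dist_eq]
    have h := hHolder 0 h01 1 h11
    have : ‖(0:ℂ) - 1‖ = 1 := by simp
    rw [this, Real.one_rpow, mul_one] at h
    exact le_trans (norm_nonneg _) h
  have hcont : ContinuousOn f (closedBall (0:ℂ) 1) := holder_continuousOn hβ0 hHolder
  have hζball : ∀ θ : ℝ, Complex.exp (θ * Complex.I) ∈ closedBall (0:ℂ) 1 := by
    intro θ
    simp [mem_closedBall, Complex.dist_eq, Complex.norm_exp_ofReal_mul_I]
  set g : ℝ → ℂ := fun θ => (f (Complex.exp (θ * Complex.I)) - f (-1)) /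
    (1 + Complex.exp (θ * Complex.I)) with hg
  have hfc : Continuous fun θ : ℝ => f (Complex.exp (θ * Complex.I)) := by
    apply hcont.comp_continuous
      (Complex.continuous_exp.comp (Complex.continuous_ofReal.mul continuous_const))
    exact hζball
  have hexpc : Continuous fun θ : ℝ => Complex.exp (θ * Complex.I) :=
    Complex.continuous_exp.comp (Complex.continuous_ofReal.mul continuous_const)
  have hmeasg : ∀ c : ℂ, AEStronglyMeasurable
      (fun θ : ℝ => (f (Complex.exp (θ * Complex.I)) - f (-1)) /
        (c + Complex.exp (θ * Complex.I)))
      (volume.restrict (Set.uIoc (0:ℝ) (2*π))) := by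
    intro c
    apply Measurable.aestronglyMeasurable
    exact (hfc.measurable.sub measurable_const).div
      (measurable_const.add hexpc.measurable)
  set bound : ℝ → ℝ := fun θ => (C * (2/π) ^ (β-1)) * |π - θ| ^ (β-1) with hbdef
  have hboundint : IntervalIntegrable bound volume 0 (2*π) :=
    (bound_integrable' (by linarith : (-1:ℝ) < β - 1)).const_mul _
  have hbound : ∀ (ε θ : ℝ), 0 ≤ ε → θ ∈ Set.uIoc (0:ℝ) (2*π) →
      ‖(f (Complex.exp (θ * Complex.I)) - f (-1)) /
        (1 + (ε:ℂ) + Complex.exp (θ * Complex.I))‖ ≤ bound θ := by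
    intro ε θ hε hθ
    rw [Set.uIoc_of_le h2π] at hθ
    set ζ := Complex.exp (θ * Complex.I) with hζ
    have hm1ball : (-1:ℂ) ∈ closedBall (0:ℂ) 1 := by
      simp [mem_closedBall, Complex.dist_eq]
    have hnum : ‖f ζ - f (-1)‖ ≤ C * ‖1 + ζ‖ ^ β := by
      have h := hHolder ζ (hζball θ) (-1) hm1ball
      have : ζ - (-1) = 1 + ζ := by ring
      rwa [this] at h
    have hlow : 2/π * |π - θ| ≤ ‖1 + ζ‖ := lower_bound hθ.1.le hθ.2
    have hmono : ‖1 + ζ‖ ≤ ‖1 + (ε:ℂ) + ζ‖ := by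
      have hre : 0 ≤ (1 + ζ).re := by
        simp only [Complex.add_re, Complex.one_re, hζ, Complex.exp_ofReal_mul_I_re]
        linarith [Real.neg_one_le_cos θ]
      have h := norm_le_norm_add_eps hre hε
      rwa [show ((ε:ℂ) + (1 + ζ)) = 1 + (ε:ℂ) + ζ by ring] at h
    by_cases hzero : θ = π
    · subst hzero
      have hζm1 : ζ = -1 := by rw [hζ]; exact Complex.exp_pi_mul_I
      have hnum0 : f ζ - f (-1) = 0 := by rw [hζm1]; ring
      rw [hnum0, zero_div, norm_zero, hbdef]
      simp only [sub_self, abs_zero]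
      rw [Real.zero_rpow (by intro h; linarith [h] : β - 1 ≠ 0)]
      simp
    · have habs : 0 < |π - θ| := abs_pos.2 (sub_ne_zero.2 (fun h => hzero h.symm))
      have hm : 0 < 2/π * |π - θ| := by positivity
      have hpos : 0 < ‖1 + ζ‖ := lt_of_lt_of_le hm hlow
      calc ‖(f ζ - f (-1)) / (1 + (ε:ℂ) + ζ)‖
          = ‖f ζ - f (-1)‖ / ‖1 + (ε:ℂ) + ζ‖ := norm_div _ _
        _ ≤ (C * ‖1 + ζ‖ ^ β) / ‖1 + ζ‖ :=
            div_le_div₀ (by positivity) hnum hpos hmono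
        _ = C * ‖1 + ζ‖ ^ (β - 1) := by
            rw [Real.rpow_sub hpos, Real.rpow_one]; ring
        _ ≤ C * (2/π * |π - θ|) ^ (β - 1) := by
            apply mul_le_mul_of_nonneg_left _ hC
            exact Real.rpow_le_rpow_of_nonpos hm hlow (by linarith)
        _ = bound θ := by
            rw [hbdef, Real.mul_rpow (by positivity) (abs_nonneg _)]; ring
  have hane : ∀ᵐ θ : ℝ ∂volume, θ ≠ π := by
    rw [MeasureTheory.ae_iff]
    simp only [not_not, Set.setOf_eq_eq_singleton]
    exact measure_singleton π
  have hne : ∀ᵐ θ : ℝ ∂volume, θ ∈ Set.uIoc (0:ℝ) (2*π) →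
      Complex.exp (θ * Complex.I) ≠ -1 := by
    filter_upwards [hane] with θ hθ hmem hc
    rw [Set.uIoc_of_le h2π] at hmem
    have hlow := lower_bound hmem.1.le hmem.2
    rw [hc] at hlow
    simp only [add_neg_cancel, norm_zero] at hlow
    have habs : 0 < |π - θ| := abs_pos.2 (sub_ne_zero.2 (fun h => hθ h.symm))
    have : 0 < 2/π * |π - θ| := by positivity
    linarith
  -- dominated convergence
  set F : ℕ → ℝ → ℂ := fun n θ => (f (Complex.exp (θ * Complex.I)) - f (-1)) /
    (1 + ((1 / ((n:ℝ) + 1) : ℝ) : ℂ) + Complex.exp (θ * Complex.I)) with hF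
  have heps : ∀ n : ℕ, (0:ℝ) < 1 / ((n:ℝ) + 1) := by
    intro n; positivity
  have htendeps : Filter.Tendsto (fun n : ℕ => 1 / ((n:ℝ) + 1)) Filter.atTop (nhds 0) :=
    tendsto_one_div_add_atTop_nhds_zero_nat
  have hkey : Filter.Tendsto (fun n => ∫ θ in (0:ℝ)..(2*π), F n θ) Filter.atTop
      (nhds (∫ θ in (0:ℝ)..(2*π), g θ)) := by
    apply intervalIntegral.tendsto_integral_filter_of_dominated_convergence bound
    · exact Filter.Eventually.of_forall fun n => hmeasg _
    · exact Filter.Eventually.of_forall fun n =>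
        Filter.Eventually.of_forall fun θ hθ => hbound _ θ (heps n).le hθ
    · exact hboundint
    · filter_upwards [hne] with θ hθ hmem
      have hζne : (1 : ℂ) + Complex.exp (θ * Complex.I) ≠ 0 := by
        intro h; exact hθ hmem (by linear_combination h)
      apply Filter.Tendsto.div tendsto_const_nhds _ hζne
      have hcast : Filter.Tendsto (fun n : ℕ => ((1 / ((n:ℝ) + 1) : ℝ) : ℂ))
          Filter.atTop (nhds 0) := by
        have := (Complex.continuous_ofReal.tendsto 0).comp htendeps
        simpa [Function.comp_def] using this
      have := (tendsto_const_nhds (x := (1:ℂ))).add hcast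
      have h2 := this.add (tendsto_const_nhds (x := Complex.exp (θ * Complex.I)))
      simpa using h2
  have hvals : ∀ n : ℕ, (∫ θ in (0:ℝ)..(2*π), F n θ)
      = 2 * π * (-(f (-1)) / (1 + ((1 / ((n:ℝ) + 1) : ℝ) : ℂ))) := fun n =>
    cauchy_step hd hcont hf0 (heps n)
  have htend2 : Filter.Tendsto
      (fun n : ℕ => 2 * (π:ℂ) * (-(f (-1)) / (1 + ((1 / ((n:ℝ) + 1) : ℝ) : ℂ))))
      Filter.atTop (nhds (-(2 * (π:ℂ)) * f (-1))) := by
    have hcast : Filter.Tendsto (fun n : ℕ => ((1 / ((n:ℝ) + 1) : ℝ) : ℂ))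
        Filter.atTop (nhds 0) := by
      have := (Complex.continuous_ofReal.tendsto 0).comp htendeps
      simpa [Function.comp_def] using this
    have hden : Filter.Tendsto (fun n : ℕ => (1:ℂ) + ((1 / ((n:ℝ) + 1) : ℝ) : ℂ))
        Filter.atTop (nhds 1) := by
      have := (tendsto_const_nhds (x := (1:ℂ))).add hcast
      simpa using this
    have hq : Filter.Tendsto (fun n : ℕ => -(f (-1)) / (1 + ((1 / ((n:ℝ) + 1) : ℝ) : ℂ)))
        Filter.atTop (nhds (-(f (-1)))) := by
      have := Filter.Tendsto.div (tendsto_const_nhds (x := -(f (-1)))) hden one_ne_zero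
      rw [div_one] at this
      exact this
    have := (tendsto_const_nhds (x := 2 * (π:ℂ))).mul hq
    convert this using 2 <;> ring
  have hIntg : (∫ θ in (0:ℝ)..(2*π), g θ) = -(2 * (π:ℂ)) * f (-1) := by
    apply tendsto_nhds_unique _ htend2
    have : (fun n : ℕ => ∫ θ in (0:ℝ)..(2*π), F n θ)
        = fun n : ℕ => 2 * (π:ℂ) * (-(f (-1)) / (1 + ((1 / ((n:ℝ) + 1) : ℝ) : ℂ))) := by
      funext n; exact hvals n
    rw [← this]
    exact hkey
  have hπℂ : ((π:ℝ) : ℂ) ≠ 0 := by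
    simpa using Real.pi_ne_zero
  refine ⟨?_, ?_, ?_⟩
  · rw [show (∫ θ in (0:ℝ)..(2*π), (f (Complex.exp (θ * Complex.I)) - f (-1)) /
          (1 + Complex.exp (θ * Complex.I))) = ∫ θ in (0:ℝ)..(2*π), g θ from rfl,
      hIntg]
    field_simp
  · -- second statement
    have hre : ∀ θ : ℝ, Complex.exp (θ * Complex.I) ≠ -1 →
        ((1:ℂ) / (1 + Complex.exp (θ * Complex.I))).re = 1/2 := by
      intro θ hθ
      set w : ℂ := 1 + Complex.exp (θ * Complex.I) with hw
      have hwne : w ≠ 0 := by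
        intro h; exact hθ (by linear_combination h)
      have hwre : w.re = 1 + Real.cos θ := by
        simp [hw]
      have hwim : w.im = Real.sin θ := by
        simp [hw]
      have hnormSq : Complex.normSq w = 2 * (1 + Real.cos θ) := by
        rw [Complex.normSq_apply, hwre, hwim]
        nlinarith [Real.sin_sq_add_cos_sq θ]
      have hcpos : 1 + Real.cos θ ≠ 0 := by
        intro h
        apply hwne
        apply Complex.normSq_eq_zero.mp
        rw [hnormSq, h, mul_zero]
      rw [one_div, Complex.inv_re, hwre, hnormSq]
      field_simp
    have hint2 : (∫ θ in (0:ℝ)..(2*π), ((1:ℂ) / (1 + Complex.exp (θ * Complex.I))).re)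
        = π := by
      rw [intervalIntegral.integral_congr_ae (g := fun _ : ℝ => (1/2 : ℝ))
        (by filter_upwards [hne] with θ hθ hmem; exact hre θ (hθ hmem))]
      rw [intervalIntegral.integral_const]
      simp
      ring
    rw [hint2]
    rw [show (1 / (2*π) * π : ℝ) = 1/2 by field_simp]
    push_cast
    ring
  · -- third statement
    set t : ℝ := (f (-1)).im with ht
    have hf1 : f (-1) = (t:ℂ) * Complex.I := by
      apply Complex.ext <;> simp [hfm1, ht]
    -- integrability of g
    have hgint : IntervalIntegrable g volume 0 (2*π) := by
      rw [intervalIntegrable_iff]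
      apply MeasureTheory.Integrable.mono' (intervalIntegrable_iff.mp hboundint)
      · have := hmeasg 1
        exact this
      · apply (ae_restrict_iff' measurableSet_uIoc).2
        apply Filter.Eventually.of_forall
        intro θ hθ
        have h := hbound 0 θ le_rfl hθ
        rw [show ((1:ℂ) + ((0:ℝ):ℂ) + Complex.exp (θ * Complex.I))
          = 1 + Complex.exp (θ * Complex.I) by push_cast; ring] at h
        exact h
    have hre : ∀ θ : ℝ, Complex.exp (θ * Complex.I) ≠ -1 →
        ((1:ℂ) / (1 + Complex.exp (θ * Complex.I))).re = 1/2 := by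
      intro θ hθ
      set w : ℂ := 1 + Complex.exp (θ * Complex.I) with hw
      have hwne : w ≠ 0 := by
        intro h; exact hθ (by linear_combination h)
      have hwre : w.re = 1 + Real.cos θ := by simp [hw]
      have hwim : w.im = Real.sin θ := by simp [hw]
      have hnormSq : Complex.normSq w = 2 * (1 + Real.cos θ) := by
        rw [Complex.normSq_apply, hwre, hwim]
        nlinarith [Real.sin_sq_add_cos_sq θ]
      have hcpos : 1 + Real.cos θ ≠ 0 := by
        intro h
        apply hwne
        apply Complex.normSq_eq_zero.mp
        rw [hnormSq, h, mul_zero]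
      rw [one_div, Complex.inv_re, hwre, hnormSq]
      field_simp
    have hcongr3 : ∀ᵐ θ : ℝ ∂volume, θ ∈ Set.uIoc (0:ℝ) (2*π) →
        (f (Complex.exp (θ * Complex.I)) / (1 + Complex.exp (θ * Complex.I))).im
          = (g θ).im + t/2 := by
      filter_upwards [hne] with θ hθ hmem
      have hζne : (1 : ℂ) + Complex.exp (θ * Complex.I) ≠ 0 := by
        intro h; exact hθ hmem (by linear_combination h)
      have hsplit : f (Complex.exp (θ * Complex.I)) / (1 + Complex.exp (θ * Complex.I))
          = g θ + f (-1) / (1 + Complex.exp (θ * Complex.I)) := by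
        rw [hg]
        field_simp
        ring
      rw [hsplit, Complex.add_im]
      congr 1
      have : f (-1) / (1 + Complex.exp (θ * Complex.I))
          = (t:ℂ) * Complex.I * ((1:ℂ) / (1 + Complex.exp (θ * Complex.I))) := by
        rw [hf1]; ring
      have hre2 := hre θ (hθ hmem)
      rw [this, Complex.mul_im, hre2]
      have h1 : ((t:ℂ) * Complex.I).re = 0 := by simp
      have h2 : ((t:ℂ) * Complex.I).im = t := by simp
      rw [h1, h2]
      ring
    have hint3 : (∫ θ in (0:ℝ)..(2*π),
        (f (Complex.exp (θ * Complex.I)) / (1 + Complex.exp (θ * Complex.I))).im)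
        = -π * t := by
      rw [intervalIntegral.integral_congr_ae hcongr3]
      have hgim : IntervalIntegrable (fun θ => (g θ).im) volume 0 (2*π) := by
        rw [intervalIntegrable_iff] at hgint ⊢
        exact hgint.im
      rw [intervalIntegral.integral_add hgim (intervalIntegrable_const)]
      have him : (∫ θ in (0:ℝ)..(2*π), (g θ).im)
          = (∫ θ in (0:ℝ)..(2*π), g θ).im := by
        rw [intervalIntegral.integral_of_le h2π, intervalIntegral.integral_of_le h2π]
        have hint : Integrable g (volume.restrict (Set.Ioc (0:ℝ) (2*π))) := by
          rw [intervalIntegrable_iff, Set.uIoc_of_le h2π] at hgint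
          exact hgint
        have := integral_im (𝕜 := ℂ) hint
        simpa using this
      rw [him, hIntg, hf1, intervalIntegral.integral_const]
      simp
      ring
    rw [hint3]
    rw [show (1 / (2*π) * (-π * t) : ℝ) = -t/2 by field_simp]
    rw [hf1]
    push_cast
    ring
end
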